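/- Let r ≥ 1 and let μ be a probability law on A^r that is stationary-consistent, i.e. ∑_{a∈A} μ(s,a) = ∑_{α∈A} μ(α,s) for every s ∈ A^{r−1}; write μ₋(s) for this common (r−1)-block marginal (with the convention that for r = 1 the set A^0 is a singleton and μ₋ ≡ 1). For s ∈ A^{r−1} with μ₋(s) > 0 set q(a|s) := μ(s,a)/μ₋(s), and for s with μ₋(s) = 0 let q(·|s) be an arbitrary probability vector on A. Define u*(c,a) := μ(c)·q(a | c₂,…,c_r) for c = (c₁,…,c_r) ∈ A^r and a ∈ A. Let U(μ) be the set of stationary-consistent block laws u on A^r × A with context marginal η_u = μ. Then u* ∈ U(μ), and u* is the unique maximizer of the entropy-rate functional J on U(μ): J(u) ≤ J(u*) for every u ∈ U(μ), with equality only if u = u*. -/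

import Mathlib

open Finset

/-- Context marginal of a block law on `A^(n+1) × A` (contexts are `Fin (n+1) → A`,
so the memory length is `r = n+1 ≥ 1`). -/
noncomputable def eta {A : Type*} [Fintype A] {n : ℕ}
    (u : (Fin (n + 1) → A) → A → ℝ) (c : Fin (n + 1) → A) : ℝ :=
  ∑ a, u c a

/-- Entropy-rate functional.  In Lean, `Real.log 0 = 0` and `0 * x = 0`, so the
conventions `0·log 0 = 0` and "terms with `u(c,a) = 0` contribute `0`" hold
automatically. -/
noncomputable def J {A : Type*} [Fintype A] {n : ℕ}
    (u : (Fin (n + 1) → A) → A → ℝ) : ℝ :=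
  -∑ c, ∑ a, u c a * Real.log (u c a / eta u c)

/-- A block law: nonnegative entries with total mass one. -/
def IsBlockLaw {A : Type*} [Fintype A] {n : ℕ}
    (u : (Fin (n + 1) → A) → A → ℝ) : Prop :=
  (∀ c a, 0 ≤ u c a) ∧ ∑ c, ∑ a, u c a = 1

/-- The context `(α, d₁, …, d_{r-1})` obtained from `d = (d₁, …, d_r)` by
prepending `α` and dropping the last entry. -/
def shiftCtx {A : Type*} {n : ℕ} (α : A) (d : Fin (n + 1) → A) : Fin (n + 1) → A :=
  Fin.cons α (fun i : Fin n => d i.castSucc)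

/-- Stationary consistency:
`∑_α u((α,d₁,…,d_{r-1}), d_r) = ∑_β u(d, β)` for every block `d`. -/
def StationaryConsistent {A : Type*} [Fintype A] {n : ℕ}
    (u : (Fin (n + 1) → A) → A → ℝ) : Prop :=
  ∀ d : Fin (n + 1) → A,
    ∑ α : A, u (shiftCtx α d) (d (Fin.last n)) = ∑ β : A, u d β

/-- The feasible class determined by features `G` and targets `b`. -/
def Feasible {A : Type*} [Fintype A] {n m : ℕ}
    (G : Fin m → (Fin (n + 1) → A) → A → ℝ) (b : Fin m → ℝ)
    (u : (Fin (n + 1) → A) → A → ℝ) : Prop :=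
  IsBlockLaw u ∧ StationaryConsistent u ∧
    ∀ j, ∑ c, ∑ a, u c a * G j c a = b j

/-- The common `(r-1)`-block marginal `μ₋(s) = ∑_a μ(s,a)` of a
stationary-consistent law `μ` on `A^r` (contexts are `Fin (n+1) → A`, so
`r = n+1` and `(r-1)`-blocks are `Fin n → A`; for `r = 1`, `Fin 0 → A` is a
singleton). -/
noncomputable def muMinus {A : Type*} [Fintype A] {n : ℕ}
    (μ : (Fin (n + 1) → A) → ℝ) (s : Fin n → A) : ℝ :=
  ∑ a, μ (Fin.snoc s a)

/-- The `(r-1)`-step Markov extension `u*(c,a) = μ(c) · q(a | c₂,…,c_r)`. -/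
noncomputable def MarkovExt {A : Type*} [Fintype A] {n : ℕ}
    (μ : (Fin (n + 1) → A) → ℝ) (q : (Fin n → A) → A → ℝ)
    (c : Fin (n + 1) → A) (a : A) : ℝ :=
  μ c * q (Fin.tail c) a

-- scalar Gibbs lemma
lemma gibbs_scalar (t : ℝ) (ht : 0 ≤ t) :
    t - 1 ≤ t * Real.log t ∧ (t * Real.log t = t - 1 → t = 1) := by
  rcases ht.eq_or_lt with h0 | h0
  · refine ⟨by simp [← h0], fun h => ?_⟩
    rw [← h0] at h; norm_num at h
  rcases eq_or_ne t 1 with h1 | h1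
  · simp [h1]
  have hx : -Real.log t ≠ 0 := by
    intro h
    have hl : Real.log t = 0 := by linarith
    rcases Real.log_eq_zero.mp hl with h | h | h <;> [exact h0.ne' h; exact h1 h; linarith]
  have h2 := Real.add_one_lt_exp hx
  rw [Real.exp_neg, Real.exp_log h0] at h2
  have h3 := mul_lt_mul_of_pos_left h2 h0
  rw [mul_inv_cancel₀ h0.ne'] at h3
  constructor
  · nlinarith
  · intro h; nlinarith

-- reindex lemma
lemma sum_pi_succ {A : Type*} [Fintype A] {n : ℕ} (f : (Fin (n + 1) → A) → ℝ) :
    ∑ c, f c = ∑ α : A, ∑ s : Fin n → A, f (Fin.cons α s) := by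
  have h := Fintype.sum_equiv (Fin.consEquiv fun _ => A)
    (fun p : A × (Fin n → A) => f (Fin.cons p.1 p.2)) f (fun p => rfl)
  rw [← h, Fintype.sum_prod_type]
/-- For a stationary-consistent probability law `μ` on `A^r`, with
`q(a|s) = μ(s,a)/μ₋(s)` where `μ₋(s) > 0` and `q(·|s)` an arbitrary probability
vector elsewhere, the Markov extension `u*(c,a) = μ(c)·q(a|c₂,…,c_r)` lies in
`U(μ)` and is the unique maximizer of `J` on `U(μ)`. -/
theorem stmt8 {A : Type*} [Fintype A] [Nonempty A] {n : ℕ}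
    (μ : (Fin (n + 1) → A) → ℝ)
    (hμ : (∀ c, 0 ≤ μ c) ∧ ∑ c, μ c = 1)
    (hμstat : ∀ s : Fin n → A, ∑ a, μ (Fin.snoc s a) = ∑ α, μ (Fin.cons α s))
    (q : (Fin n → A) → A → ℝ)
    (hqpos : ∀ s, 0 < muMinus μ s → ∀ a, q s a = μ (Fin.snoc s a) / muMinus μ s)
    (hqzero : ∀ s, muMinus μ s = 0 → (∀ a, 0 ≤ q s a) ∧ ∑ a, q s a = 1) :
    (IsBlockLaw (MarkovExt μ q) ∧ StationaryConsistent (MarkovExt μ q) ∧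
      ∀ c, eta (MarkovExt μ q) c = μ c) ∧
    (∀ u, (IsBlockLaw u ∧ StationaryConsistent u ∧ ∀ c, eta u c = μ c) →
      J u ≤ J (MarkovExt μ q) ∧ (J u = J (MarkovExt μ q) → u = MarkovExt μ q)) := by
  obtain ⟨hμ0, hμ1⟩ := hμ
  have hmm0 : ∀ s : Fin n → A, 0 ≤ muMinus μ s :=
    fun s => Finset.sum_nonneg fun a _ => hμ0 _
  have hq0 : ∀ s a, 0 ≤ q s a := by
    intro s a
    rcases (hmm0 s).eq_or_lt with h | h
    · exact (hqzero s h.symm).1 a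
    · rw [hqpos s h a]; exact div_nonneg (hμ0 _) (hmm0 s)
  have hq1 : ∀ s, ∑ a, q s a = 1 := by
    intro s
    rcases (hmm0 s).eq_or_lt with h | h
    · exact (hqzero s h.symm).2
    · rw [Finset.sum_congr rfl fun a _ => hqpos s h a, ← Finset.sum_div]
      exact div_self h.ne'
  have hsnoc_le : ∀ (s : Fin n → A) a, μ (Fin.snoc s a) ≤ muMinus μ s :=
    fun s a => Finset.single_le_sum (fun b _ => hμ0 _) (Finset.mem_univ a)
  have hcons_le : ∀ (s : Fin n → A) α, μ (Fin.cons α s) ≤ muMinus μ s := by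
    intro s α
    rw [muMinus, hμstat s]
    exact Finset.single_le_sum (f := fun b => μ (Fin.cons b s))
      (fun b _ => hμ0 _) (Finset.mem_univ α)
  have heta : ∀ c, eta (MarkovExt μ q) c = μ c := by
    intro c
    simp only [eta, MarkovExt, ← Finset.mul_sum, hq1, mul_one]
  have hstar0 : ∀ c a, 0 ≤ MarkovExt μ q c a :=
    fun c a => mul_nonneg (hμ0 c) (hq0 _ _)
  have hstarBL : IsBlockLaw (MarkovExt μ q) := by
    refine ⟨hstar0, ?_⟩
    calc ∑ c, ∑ a, MarkovExt μ q c a = ∑ c, μ c :=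
          Finset.sum_congr rfl fun c _ => heta c
      _ = 1 := hμ1
  -- stationary consistency of u*
  have hstatstar : StationaryConsistent (MarkovExt μ q) := by
    intro d
    have hrhs : ∑ β, MarkovExt μ q d β = μ d := heta d
    rw [hrhs]
    have hL : ∑ α, MarkovExt μ q (shiftCtx α d) (d (Fin.last n))
        = muMinus μ (Fin.init d) * q (Fin.init d) (d (Fin.last n)) := by
      simp only [MarkovExt, shiftCtx, Fin.tail_cons]
      rw [← Finset.sum_mul, muMinus, hμstat]
      rfl
    rw [hL]
    rcases (hmm0 (Fin.init d)).eq_or_lt with h | h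
    · have h1 := hsnoc_le (Fin.init d) (d (Fin.last n))
      rw [Fin.snoc_init_self] at h1
      have h2 : μ d = 0 := le_antisymm (by rw [← h] at h1; exact h1) (hμ0 d)
      rw [← h, h2, zero_mul]
    · rw [hqpos _ h, Fin.snoc_init_self, mul_div_cancel₀ _ h.ne']
  -- column identity
  have hcol : ∀ (u : (Fin (n + 1) → A) → A → ℝ), StationaryConsistent u →
      (∀ c, eta u c = μ c) →
      ∀ (s : Fin n → A) (a : A), ∑ α, u (Fin.cons α s) a = μ (Fin.snoc s a) := by
    intro u hst he s a
    have h := hst (Fin.snoc s a)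
    have h1 : ∀ α : A, shiftCtx α (Fin.snoc s a) = Fin.cons α s := by
      intro α
      simp [shiftCtx, Fin.snoc_castSucc]
    simp only [h1, Fin.snoc_last] at h
    rw [h]
    exact he (Fin.snoc s a)
  refine ⟨⟨hstarBL, hstatstar, heta⟩, ?_⟩
  rintro u ⟨⟨hu0, hu1⟩, hustat, hueta⟩
  -- absolute continuity
  have hucol := hcol u hustat hueta
  have hle1 : ∀ c a, u c a ≤ μ c := by
    intro c a
    rw [← hueta c]
    exact Finset.single_le_sum (fun b _ => hu0 c b) (Finset.mem_univ a)
  have hle2 : ∀ c a, u c a ≤ μ (Fin.snoc (Fin.tail c) a) := by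
    intro c a
    rw [← hucol (Fin.tail c) a]
    have h2 : u (Fin.cons (c 0) (Fin.tail c)) a ≤ ∑ α, u (Fin.cons α (Fin.tail c)) a :=
      Finset.single_le_sum (f := fun α => u (Fin.cons α (Fin.tail c)) a)
        (fun b _ => hu0 _ _) (Finset.mem_univ (c 0))
    rwa [Fin.cons_self_tail] at h2
  have habs : ∀ c a, MarkovExt μ q c a = 0 → u c a = 0 := by
    intro c a h
    rcases mul_eq_zero.mp h with h | h
    · exact le_antisymm (h ▸ hle1 c a) (hu0 c a)
    · -- q (tail c) a = 0
      rcases (hμ0 c).eq_or_lt with hc | hc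
      · exact le_antisymm (hc ▸ hle1 c a) (hu0 c a)
      · have hmm : 0 < muMinus μ (Fin.tail c) := by
          have := hcons_le (Fin.tail c) (c 0)
          rw [Fin.cons_self_tail] at this
          linarith
        rw [hqpos _ hmm a] at h
        have hz : μ (Fin.snoc (Fin.tail c) a) = 0 :=
          (div_eq_zero_iff.mp h).resolve_right hmm.ne'
        exact le_antisymm (hz ▸ hle2 c a) (hu0 c a)
  -- cross-term identity
  have hcross : ∀ (v : (Fin (n + 1) → A) → A → ℝ), StationaryConsistent v →
      (∀ c, eta v c = μ c) →
      ∑ c, ∑ a, v c a * Real.log (q (Fin.tail c) a)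
        = ∑ s : Fin n → A, ∑ a, μ (Fin.snoc s a) * Real.log (q s a) := by
    intro v hst he
    rw [sum_pi_succ (fun c => ∑ a, v c a * Real.log (q (Fin.tail c) a))]
    simp only [Fin.tail_cons]
    rw [Finset.sum_comm]
    refine Finset.sum_congr rfl fun s _ => ?_
    rw [Finset.sum_comm]
    refine Finset.sum_congr rfl fun a _ => ?_
    rw [← Finset.sum_mul, hcol v hst he s a]
  -- J of u*
  have hJstar : J (MarkovExt μ q)
      = -∑ c, ∑ a, MarkovExt μ q c a * Real.log (q (Fin.tail c) a) := by
    unfold J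
    congr 1
    refine Finset.sum_congr rfl fun c _ => Finset.sum_congr rfl fun a _ => ?_
    rw [heta c]
    rcases eq_or_ne (MarkovExt μ q c a) 0 with h | h
    · rw [h]; ring
    · have hc : μ c ≠ 0 := fun hz => h (by simp [MarkovExt, hz])
      congr 1
      rw [MarkovExt, mul_div_cancel_left₀ _ hc]
  have hJu : J u = -∑ c, ∑ a, u c a * Real.log (u c a / μ c) := by
    unfold J
    congr 1
    exact Finset.sum_congr rfl fun c _ => by rw [hueta c]
  -- per-term difference
  have hterm : ∀ c a, u c a * Real.log (u c a / μ c)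
      - u c a * Real.log (q (Fin.tail c) a)
      = u c a * Real.log (u c a / MarkovExt μ q c a) := by
    intro c a
    rcases (hu0 c a).eq_or_lt with h | h
    · rw [← h]; ring
    · have hstar : 0 < MarkovExt μ q c a := by
        rcases (hstar0 c a).eq_or_lt with h2 | h2
        · exact absurd (habs c a h2.symm) h.ne'
        · exact h2
      have hμc : 0 < μ c := lt_of_lt_of_le h (hle1 c a)
      have hqc : 0 < q (Fin.tail c) a := by
        rcases (hq0 (Fin.tail c) a).eq_or_lt with h2 | h2
        · exfalso; rw [MarkovExt, ← h2, mul_zero] at hstar; exact lt_irrefl 0 hstar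
        · exact h2
      rw [MarkovExt, Real.log_div h.ne' hμc.ne',
        Real.log_div h.ne' (mul_pos hμc hqc).ne', Real.log_mul hμc.ne' hqc.ne']
      ring
  -- the nonnegative defect
  set f : (Fin (n + 1) → A) → A → ℝ :=
    fun c a => u c a * Real.log (u c a / MarkovExt μ q c a) - u c a + MarkovExt μ q c a
    with hf
  have hfkey : ∀ c a, 0 ≤ f c a ∧ (f c a = 0 → u c a = MarkovExt μ q c a) := by
    intro c a
    rcases (hstar0 c a).eq_or_lt with hp | hp
    · have hz := habs c a hp.symm
      constructor
      · simp [hf, hz, ← hp]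
      · intro _; rw [hz, ← hp]
    · set p := MarkovExt μ q c a with hpdef
      set t := u c a / p with htdef
      have ht0 : 0 ≤ t := div_nonneg (hu0 c a) hp.le
      have hx : u c a = p * t := by
        rw [htdef, mul_div_cancel₀ _ hp.ne']
      obtain ⟨hg1, hg2⟩ := gibbs_scalar t ht0
      have hfval : f c a = p * (t * Real.log t - (t - 1)) := by
        have h1 : u c a / MarkovExt μ q c a = t := rfl
        simp only [hf, h1, ← hpdef]
        rw [hx]
        rw [mul_div_cancel_left₀ _ hp.ne']
        ring
      constructor
      · rw [hfval]
        exact mul_nonneg hp.le (by linarith)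
      · intro h
        rw [hfval] at h
        have : t * Real.log t - (t - 1) = 0 := by
          rcases mul_eq_zero.mp h with h' | h'
          · exact absurd h' hp.ne'
          · exact h'
        have ht1 : t = 1 := hg2 (by linarith)
        rw [hx, ht1, mul_one]
  -- total mass identities
  have husum : ∑ c, ∑ a, u c a = 1 := hu1
  have hssum : ∑ c, ∑ a, MarkovExt μ q c a = 1 := hstarBL.2
  have hkey : J (MarkovExt μ q) - J u = ∑ c, ∑ a, f c a := by
    have e1 : ∑ c, ∑ a, f c a
        = (∑ c, ∑ a, u c a * Real.log (u c a / MarkovExt μ q c a))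
          - (∑ c, ∑ a, u c a) + (∑ c, ∑ a, MarkovExt μ q c a) := by
      simp only [hf, Finset.sum_add_distrib, Finset.sum_sub_distrib]
    rw [e1, husum, hssum]
    have e2 : ∑ c, ∑ a, u c a * Real.log (u c a / MarkovExt μ q c a)
        = (∑ c, ∑ a, u c a * Real.log (u c a / μ c))
          - ∑ c, ∑ a, u c a * Real.log (q (Fin.tail c) a) := by
      rw [← Finset.sum_sub_distrib]
      refine Finset.sum_congr rfl fun c _ => ?_
      rw [← Finset.sum_sub_distrib]
      exact Finset.sum_congr rfl fun a _ => (hterm c a).symm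
    rw [e2, hJstar, hJu, hcross u hustat hueta,
      hcross (MarkovExt μ q) hstatstar heta]
    ring
  have hsumf : 0 ≤ ∑ c, ∑ a, f c a :=
    Finset.sum_nonneg fun c _ => Finset.sum_nonneg fun a _ => (hfkey c a).1
  constructor
  · linarith [hkey, hsumf]
  · intro h
    have hz : ∑ c, ∑ a, f c a = 0 := by linarith [hkey]
    have hz2 : ∀ c ∈ Finset.univ, ∑ a, f c a = 0 :=
      (Finset.sum_eq_zero_iff_of_nonneg
        (fun c _ => Finset.sum_nonneg fun a _ => (hfkey c a).1)).mp hz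
    funext c a
    have hz3 : ∀ a ∈ Finset.univ, f c a = 0 :=
      (Finset.sum_eq_zero_iff_of_nonneg (fun a _ => (hfkey c a).1)).mp
        (hz2 c (Finset.mem_univ c))
    exact (hfkey c a).2 (hz3 a (Finset.mem_univ a))
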